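/- For every integer r ≥ 1, the multiple zeta value ζ(2,2,...,2) with r twos (and all inequalities strict, i.e. Σ_{k₁ > k₂ > ... > k_r ≥ 1} 1/(k₁²⋯k_r²)) equals π^{2r}/(2r+1)!. -/

import Mathlib

open Finset ENNReal Filter Topology

noncomputable def Wgt (k : ℕ) : ℝ≥0∞ := ((k : ℝ≥0∞) ^ 2)⁻¹

noncomputable def Esym (r N : ℕ) : ℝ≥0∞ :=
  ∑ t ∈ (Finset.Icc 1 N).powersetCard r, ∏ k ∈ t, Wgt k

abbrev MZIdx (r : ℕ) := {m : Fin r → ℕ // (∀ i, 1 ≤ m i) ∧ StrictAnti m}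

/-- Equiv between strictly decreasing positive tuples and r-subsets avoiding 0. -/
noncomputable def mzEquiv (r : ℕ) : MZIdx r ≃ {t : Finset ℕ // t.card = r ∧ 0 ∉ t} where
  toFun m := ⟨Finset.image m.1 Finset.univ, by
      rw [Finset.card_image_of_injective _ m.2.2.injective, Finset.card_univ, Fintype.card_fin],
    by
      simp only [Finset.mem_image, not_exists]
      intro i hi
      have := m.2.1 i
      omega⟩
  invFun t := ⟨fun i => t.1.orderEmbOfFin t.2.1 i.rev,
    fun i => Nat.one_le_iff_ne_zero.2 (by
      intro h
      simp only at h
      have hmem := Finset.orderEmbOfFin_mem t.1 t.2.1 i.rev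
      rw [h] at hmem
      exact t.2.2 hmem),
    fun i j hij => (t.1.orderEmbOfFin t.2.1).strictMono (by
      simpa using Fin.rev_lt_rev.2 hij)⟩
  left_inv m := by
    have hsm : StrictMono (fun i : Fin r => m.1 i.rev) := fun i j hij =>
      m.2.2 (by simpa using Fin.rev_lt_rev.2 hij)
    have hcard : (Finset.image m.1 Finset.univ).card = r := by
      rw [Finset.card_image_of_injective _ m.2.2.injective, Finset.card_univ, Fintype.card_fin]
    have huniq := Finset.orderEmbOfFin_unique hcard
      (f := fun i : Fin r => m.1 i.rev)
      (fun i => Finset.mem_image_of_mem _ (Finset.mem_univ _)) hsm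
    apply Subtype.ext
    funext i
    have := congrFun huniq i.rev
    simpa [Fin.rev_rev] using this.symm
  right_inv t := by
    apply Subtype.ext
    simp only
    have h1 : Finset.image (fun i : Fin r => t.1.orderEmbOfFin t.2.1 i.rev) Finset.univ
        = Finset.image (t.1.orderEmbOfFin t.2.1) Finset.univ := by
      rw [show (fun i : Fin r => t.1.orderEmbOfFin t.2.1 i.rev)
          = (t.1.orderEmbOfFin t.2.1) ∘ Fin.rev from rfl, ← Finset.image_image,
        Finset.image_univ_of_surjective Fin.rev_surjective]
    rw [h1]
    apply Finset.coe_inj.1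
    rw [Finset.coe_image, Finset.coe_univ, Set.image_univ, Finset.range_orderEmbOfFin]

lemma tsum_eq_iSup_Esym (r : ℕ) :
    ∑' m : MZIdx r, ∏ j, Wgt (m.1 j) = ⨆ N, Esym r N := by
  classical
  have hval : ∀ m : MZIdx r, ∏ j, Wgt (m.1 j) = ∏ k ∈ ((mzEquiv r) m).1, Wgt k := by
    intro m
    rw [show ((mzEquiv r) m).1 = Finset.image m.1 Finset.univ from rfl,
      Finset.prod_image (fun i _ j _ h => m.2.2.injective h)]
  calc ∑' m : MZIdx r, ∏ j, Wgt (m.1 j)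
      = ∑' m : MZIdx r, ∏ k ∈ ((mzEquiv r) m).1, Wgt k := tsum_congr hval
    _ = ∑' t : {t : Finset ℕ // t.card = r ∧ 0 ∉ t}, ∏ k ∈ t.1, Wgt k :=
        Equiv.tsum_eq (mzEquiv r) (fun t => ∏ k ∈ t.1, Wgt k)
    _ = ⨆ N, Esym r N := by
        rw [ENNReal.tsum_eq_iSup_sum'
          (fun N => Finset.subtype _ ((Finset.Icc 1 N).powerset)) ?_]
        · apply iSup_congr
          intro N
          rw [Finset.sum_subtype_eq_sum_filter (fun t => ∏ k ∈ t, Wgt k)]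
          unfold Esym
          rw [Finset.powersetCard_eq_filter]
          apply Finset.sum_congr _ (fun _ _ => rfl)
          apply Finset.filter_congr
          intro t ht
          simp only [Finset.mem_powerset] at ht
          constructor
          · rintro ⟨h1, -⟩; exact h1
          · intro h1
            refine ⟨h1, fun h0 => ?_⟩
            have := ht h0
            simp at this
        · intro u
          refine ⟨u.sup (fun t => t.1.sup id), fun t ht => ?_⟩
          simp only [Finset.mem_subtype, Finset.mem_powerset]
          intro k hk
          simp only [Finset.mem_Icc]
          constructor
          · rcases Nat.eq_zero_or_pos k with h | h
            · exact absurd (h ▸ hk) t.2.2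
            · exact h
          · exact le_trans (Finset.le_sup (f := id) hk)
              (Finset.le_sup (f := fun t => t.1.sup id) ht)

lemma Esym_mono (r : ℕ) : Monotone (Esym r) := by
  intro M N h
  exact Finset.sum_le_sum_of_subset
    (Finset.powersetCard_mono (Finset.Icc_subset_Icc_right h))

lemma Esym_eq_zero {r N : ℕ} (h : N < r) : Esym r N = 0 := by
  unfold Esym
  rw [Finset.powersetCard_eq_empty.2 (by simpa using h), Finset.sum_empty]

lemma tsum_Esym_mul_pow (N : ℕ) (x : ℝ≥0∞) :
    ∑' r, Esym r N * x ^ r = ∏ k ∈ Finset.Icc 1 N, (1 + x * Wgt k) := by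
  classical
  rw [tsum_eq_sum (s := Finset.range (N + 1))
    (fun r hr => by
      rw [Esym_eq_zero (by simpa using hr), zero_mul])]
  have hcard : (Finset.Icc 1 N).card = N := by simp
  have := Finset.prod_add (fun k => x * Wgt k) (fun _ => (1 : ℝ≥0∞)) (Finset.Icc 1 N)
  calc ∑ r ∈ Finset.range (N + 1), Esym r N * x ^ r
      = ∑ t ∈ (Finset.Icc 1 N).powerset, (∏ k ∈ t, (x * Wgt k)) * ∏ k ∈ (Finset.Icc 1 N) \ t, 1 := by
        rw [Finset.sum_powerset]
        rw [hcard]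
        apply Finset.sum_congr rfl
        intro r _
        unfold Esym
        rw [Finset.sum_mul]
        apply Finset.sum_congr rfl
        intro t ht
        have htc : t.card = r := (Finset.mem_powersetCard.1 ht).2
        rw [Finset.prod_congr rfl (fun _ _ => rfl), Finset.prod_mul_distrib,
          Finset.prod_const, Finset.prod_const, htc, one_pow, mul_one, mul_comm]
    _ = ∏ k ∈ Finset.Icc 1 N, (1 + x * Wgt k) := by
        rw [← this]
        apply Finset.prod_congr rfl
        intro k _
        rw [add_comm]

lemma tsum_Z_mul_pow (x : ℝ≥0∞) :
    ∑' r, (⨆ N, Esym r N) * x ^ r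
      = ⨆ N, ∏ k ∈ Finset.Icc 1 N, (1 + x * Wgt k) := by
  have h1 : ∀ r, (⨆ N, Esym r N) * x ^ r = ⨆ N, Esym r N * x ^ r := by
    intro r; rw [ENNReal.iSup_mul]
  calc ∑' r, (⨆ N, Esym r N) * x ^ r
      = ∑' r, ⨆ N, Esym r N * x ^ r := tsum_congr h1
    _ = ⨆ N, ∑' r, Esym r N * x ^ r := by
        rw [ENNReal.tsum_eq_iSup_sum]
        have : ∀ N, ∑' r, Esym r N * x ^ r
            = ⨆ s : Finset ℕ, ∑ r ∈ s, Esym r N * x ^ r := fun N => ENNReal.tsum_eq_iSup_sum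
        simp_rw [this]
        rw [iSup_comm]
        apply iSup_congr
        intro s
        exact ENNReal.finsetSum_iSup_of_monotone
          (fun r M N h => mul_le_mul_left (Esym_mono r h) _)
    _ = ⨆ N, ∏ k ∈ Finset.Icc 1 N, (1 + x * Wgt k) := by
        exact iSup_congr fun N => tsum_Esym_mul_pow N x
open Real in
lemma tendsto_prod_one_add (t : ℝ) (ht : 0 < t) :
    Tendsto (fun N : ℕ => ∏ k ∈ Finset.Icc 1 N, (1 + t / (k : ℝ) ^ 2)) atTop
      (𝓝 (Real.sinh (Real.pi * Real.sqrt t) / (Real.pi * Real.sqrt t))) := by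
  set c : ℝ := Real.pi * Real.sqrt t with hc
  have hcpos : 0 < c := mul_pos Real.pi_pos (Real.sqrt_pos.2 ht)
  have hz := Complex.tendsto_euler_sin_prod (Real.sqrt t * Complex.I)
  have hz2 : (Real.sqrt t * Complex.I) ^ 2 = -(t : ℂ) := by
    rw [mul_pow, Complex.I_sq]
    push_cast
    rw [← Complex.ofReal_pow, Real.sq_sqrt ht.le]
    ring
  have hsin : Complex.sin (Real.pi * (Real.sqrt t * Complex.I)) = Real.sinh c * Complex.I := by
    rw [← mul_assoc, ← Complex.ofReal_mul, ← hc, Complex.sin_mul_I, Complex.ofReal_sinh]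
  rw [hz2] at hz
  have hne : ((c : ℂ) * Complex.I) ≠ 0 := by
    simp [Complex.I_ne_zero, ne_of_gt hcpos]
  have hz' := hz.const_mul (((c : ℂ) * Complex.I))⁻¹
  rw [hsin] at hz'
  have hcne : (c : ℂ) ≠ 0 := by
    exact_mod_cast ne_of_gt hcpos
  have hlim : (((c : ℂ) * Complex.I))⁻¹ * ((Real.sinh c : ℂ) * Complex.I)
      = ((Real.sinh c / c : ℝ) : ℂ) := by
    rw [mul_inv, Complex.inv_I, Complex.ofReal_div]
    field_simp
    rw [Complex.I_sq]
    ring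
  rw [hlim] at hz'
  have hfun : ∀ n : ℕ, (((c : ℂ) * Complex.I))⁻¹
        * ((Real.pi : ℂ) * (Real.sqrt t * Complex.I) * ∏ j ∈ Finset.range n,
            (1 - -(t : ℂ) / ((j : ℂ) + 1) ^ 2))
      = ((∏ k ∈ Finset.Icc 1 n, (1 + t / (k : ℝ) ^ 2) : ℝ) : ℂ) := by
    intro n
    have h1 : ((Real.pi : ℂ) * (Real.sqrt t * Complex.I)) = (c : ℂ) * Complex.I := by
      push_cast [hc]; ring
    rw [h1, ← mul_assoc, inv_mul_cancel₀ hne, one_mul]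
    rw [← Finset.Ico_add_one_right_eq_Icc, Finset.prod_Ico_eq_prod_range]
    push_cast
    apply Finset.prod_congr (by norm_num)
    intro j _
    push_cast
    ring
  rw [tendsto_congr hfun] at hz'
  exact_mod_cast Filter.tendsto_ofReal_iff.1 hz'

lemma iSup_prod_eq (t : ℝ) (ht : 0 < t) :
    ⨆ N, ∏ k ∈ Finset.Icc 1 N, (1 + ENNReal.ofReal t * Wgt k)
      = ENNReal.ofReal (Real.sinh (Real.pi * Real.sqrt t) / (Real.pi * Real.sqrt t)) := by
  have hfac : ∀ N, ∀ k ∈ Finset.Icc 1 N, (1 + ENNReal.ofReal t * Wgt k)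
      = ENNReal.ofReal (1 + t / (k : ℝ) ^ 2) := by
    intro N k hk
    have hk1 : 1 ≤ k := (Finset.mem_Icc.1 hk).1
    have hkpos : (0 : ℝ) < (k : ℝ) ^ 2 := by positivity
    rw [ENNReal.ofReal_add zero_le_one (by positivity), ENNReal.ofReal_one,
      ENNReal.ofReal_div_of_pos hkpos]
    congr 1
    rw [div_eq_mul_inv]
    congr 1
    unfold Wgt
    rw [ENNReal.ofReal_pow (by positivity)]
    norm_num
  have hF : ∀ N, ∏ k ∈ Finset.Icc 1 N, (1 + ENNReal.ofReal t * Wgt k)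
      = ENNReal.ofReal (∏ k ∈ Finset.Icc 1 N, (1 + t / (k : ℝ) ^ 2)) := by
    intro N
    rw [ENNReal.ofReal_prod_of_nonneg (fun k _ => by positivity)]
    exact Finset.prod_congr rfl (hfac N)
  have hmono : Monotone (fun N => ∏ k ∈ Finset.Icc 1 N, (1 + ENNReal.ofReal t * Wgt k)) :=
    fun M N h => Finset.prod_le_prod_of_subset_of_one_le'
      (Finset.Icc_subset_Icc_right h) (fun _ _ _ => le_self_add)
  have htend : Filter.Tendsto (fun N => ∏ k ∈ Finset.Icc 1 N, (1 + ENNReal.ofReal t * Wgt k))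
      Filter.atTop (nhds (ENNReal.ofReal (Real.sinh (Real.pi * Real.sqrt t) / (Real.pi * Real.sqrt t)))) := by
    simp_rw [hF]
    exact (ENNReal.continuous_ofReal.tendsto _).comp (tendsto_prod_one_add t ht)
  exact iSup_eq_of_tendsto hmono htend

noncomputable def Zmz (r : ℕ) : ℝ≥0∞ := ⨆ N, Esym r N

lemma tsum_Zmz (t : ℝ) (ht : 0 < t) :
    ∑' r, Zmz r * ENNReal.ofReal t ^ r
      = ENNReal.ofReal (Real.sinh (Real.pi * Real.sqrt t) / (Real.pi * Real.sqrt t)) := by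
  rw [show (fun r => Zmz r * ENNReal.ofReal t ^ r)
      = fun r => (⨆ N, Esym r N) * ENNReal.ofReal t ^ r from rfl]
  rw [tsum_Z_mul_pow, iSup_prod_eq t ht]

lemma Zmz_ne_top (r : ℕ) : Zmz r ≠ ⊤ := by
  have h1 := ENNReal.le_tsum (f := fun r => Zmz r * ENNReal.ofReal 1 ^ r) r
  rw [tsum_Zmz 1 one_pos] at h1
  simp only [ENNReal.ofReal_one, one_pow, mul_one] at h1
  exact ne_top_of_le_ne_top ENNReal.ofReal_ne_top h1

noncomputable def zmz (r : ℕ) : ℝ := (Zmz r).toReal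

lemma tsum_zmz (t : ℝ) (ht : 0 < t) :
    ∑' r, zmz r * t ^ r
      = Real.sinh (Real.pi * Real.sqrt t) / (Real.pi * Real.sqrt t) := by
  have hterm : ∀ r, Zmz r * ENNReal.ofReal t ^ r ≠ ⊤ := fun r =>
    ENNReal.mul_ne_top (Zmz_ne_top r) (by simp [ENNReal.ofReal_ne_top])
  have h1 := ENNReal.tsum_toReal_eq hterm
  rw [tsum_Zmz t ht] at h1
  have hnn : 0 ≤ Real.sinh (Real.pi * Real.sqrt t) / (Real.pi * Real.sqrt t) := by
    have h2 : 0 < Real.pi * Real.sqrt t := mul_pos Real.pi_pos (Real.sqrt_pos.2 ht)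
    have := (Real.sinh_pos_iff.2 h2).le
    positivity
  rw [ENNReal.toReal_ofReal hnn] at h1
  rw [h1]
  apply tsum_congr
  intro r
  rw [ENNReal.toReal_mul, ENNReal.toReal_pow, ENNReal.toReal_ofReal ht.le]
  rfl

lemma summable_zmz (t : ℝ) (ht : 0 < t) : Summable (fun r => zmz r * t ^ r) := by
  have hterm : ∀ r, Zmz r * ENNReal.ofReal t ^ r ≠ ⊤ := fun r =>
    ENNReal.mul_ne_top (Zmz_ne_top r) (by simp [ENNReal.ofReal_ne_top])
  have hfin : ∑' r, Zmz r * ENNReal.ofReal t ^ r ≠ ⊤ := by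
    rw [tsum_Zmz t ht]; exact ENNReal.ofReal_ne_top
  have := ENNReal.summable_toReal hfin
  convert this using 2 with r
  rw [ENNReal.toReal_mul, ENNReal.toReal_pow, ENNReal.toReal_ofReal ht.le]
  rfl

noncomputable def cmz (r : ℕ) : ℝ := Real.pi ^ (2 * r) / (Nat.factorial (2 * r + 1))

lemma hasSum_cmz (t : ℝ) (ht : 0 < t) :
    HasSum (fun r => cmz r * t ^ r)
      (Real.sinh (Real.pi * Real.sqrt t) / (Real.pi * Real.sqrt t)) := by
  set c : ℝ := Real.pi * Real.sqrt t with hc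
  have hcpos : 0 < c := mul_pos Real.pi_pos (Real.sqrt_pos.2 ht)
  have h := (Real.hasSum_sinh c).div_const c
  convert h using 1
  · rfl
  funext r
  have h2r : c ^ (2*r) = Real.pi ^ (2*r) * t ^ r := by
    rw [hc, mul_pow, pow_mul, pow_mul, Real.sq_sqrt ht.le, ← pow_mul]
  have hcne : c ≠ 0 := ne_of_gt hcpos
  unfold cmz
  rw [pow_succ]
  field_simp
  rw [h2r]

lemma zmz_nonneg (n : ℕ) : 0 ≤ zmz n := ENNReal.toReal_nonneg

lemma zmz_le (n : ℕ) : zmz n ≤ Real.sinh Real.pi / Real.pi := by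
  have h1 := ENNReal.le_tsum (f := fun r => Zmz r * ENNReal.ofReal 1 ^ r) n
  rw [tsum_Zmz 1 one_pos] at h1
  simp only [ENNReal.ofReal_one, one_pow, mul_one, Real.sqrt_one, mul_one] at h1
  have h2 := ENNReal.toReal_mono ENNReal.ofReal_ne_top h1
  rw [ENNReal.toReal_ofReal
    (div_nonneg (Real.sinh_pos_iff.2 Real.pi_pos).le Real.pi_pos.le)] at h2
  exact h2

lemma cmz_nonneg (n : ℕ) : 0 ≤ cmz n := by unfold cmz; positivity

lemma cmz_le (n : ℕ) : cmz n ≤ Real.exp (Real.pi ^ 2) := by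
  unfold cmz
  calc Real.pi ^ (2 * n) / (Nat.factorial (2 * n + 1))
      ≤ (Real.pi ^ 2) ^ n / (Nat.factorial n) := by
        rw [pow_mul]
        apply div_le_div_of_nonneg_left (by positivity) (by positivity)
        exact_mod_cast Nat.factorial_le (by omega)
    _ ≤ Real.exp (Real.pi ^ 2) := Real.pow_div_factorial_le_exp (x := Real.pi ^ 2) (by positivity) n

lemma zmz_eq_cmz : zmz = cmz := by
  set p := FormalMultilinearSeries.ofScalars ℝ zmz with hp
  set q := FormalMultilinearSeries.ofScalars ℝ cmz with hq
  have hnorm : ∀ (c : ℕ → ℝ) (n : ℕ), ‖FormalMultilinearSeries.ofScalars ℝ c n‖ = |c n| := by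
    intro c n
    rw [FormalMultilinearSeries.ofScalars,
      norm_smul (c n) (ContinuousMultilinearMap.mkPiAlgebraFin ℝ n ℝ),
      ContinuousMultilinearMap.norm_mkPiAlgebraFin, mul_one, Real.norm_eq_abs]
  have hpr : (1 : ℝ≥0∞) ≤ p.radius := by
    have := p.le_radius_of_bound (Real.sinh Real.pi / Real.pi) (r := 1) (fun n => by
      rw [hp, hnorm zmz n, abs_of_nonneg (zmz_nonneg n)]
      simpa using zmz_le n)
    simpa using this
  have hqr : (1 : ℝ≥0∞) ≤ q.radius := by
    have := q.le_radius_of_bound (Real.exp (Real.pi ^ 2)) (r := 1) (fun n => by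
      rw [hq, hnorm cmz n, abs_of_nonneg (cmz_nonneg n)]
      simpa using cmz_le n)
    simpa using this
  have hf : HasFPowerSeriesOnBall p.sum p 0 p.radius :=
    p.hasFPowerSeriesOnBall (lt_of_lt_of_le one_pos hpr)
  have hg : HasFPowerSeriesOnBall q.sum q 0 q.radius :=
    q.hasFPowerSeriesOnBall (lt_of_lt_of_le one_pos hqr)
  have hball : ∀ (rad : ℝ≥0∞), (1:ℝ≥0∞) ≤ rad →
      Metric.ball (0:ℝ) 1 ⊆ EMetric.ball 0 rad := by
    intro rad hrad
    rw [← Metric.emetric_ball, ENNReal.ofReal_one]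
    exact EMetric.ball_subset_ball hrad
  have hfa : AnalyticOnNhd ℝ p.sum (Metric.ball (0:ℝ) 1) :=
    hf.analyticOnNhd.mono (hball _ hpr)
  have hga : AnalyticOnNhd ℝ q.sum (Metric.ball (0:ℝ) 1) :=
    hg.analyticOnNhd.mono (hball _ hqr)
  have hEq : Set.EqOn p.sum q.sum (Set.Ioo (0:ℝ) 1) := by
    intro x hx
    have h1 : p.sum x = ∑' n, zmz n * x ^ n := by
      rw [hp]
      rw [show (FormalMultilinearSeries.ofScalars ℝ zmz).sum x
          = FormalMultilinearSeries.ofScalarsSum zmz x from rfl,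
        FormalMultilinearSeries.ofScalars_sum_eq]
      simp [smul_eq_mul]
    have h2 : q.sum x = ∑' n, cmz n * x ^ n := by
      rw [hq]
      rw [show (FormalMultilinearSeries.ofScalars ℝ cmz).sum x
          = FormalMultilinearSeries.ofScalarsSum cmz x from rfl,
        FormalMultilinearSeries.ofScalars_sum_eq]
      simp [smul_eq_mul]
    rw [h1, h2, tsum_zmz x hx.1, (hasSum_cmz x hx.1).tsum_eq]
  have hev : p.sum =ᶠ[nhds (1/2 : ℝ)] q.sum :=
    Filter.eventuallyEq_of_mem (isOpen_Ioo.mem_nhds (by norm_num)) hEq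
  have heqon := hfa.eqOn_of_preconnected_of_eventuallyEq hga
    ((convex_ball (0:ℝ) 1).isPreconnected) (by norm_num [Metric.mem_ball] : (1/2:ℝ) ∈ Metric.ball (0:ℝ) 1) hev
  have h0 : p.sum =ᶠ[nhds (0:ℝ)] q.sum :=
    Filter.eventuallyEq_of_mem (Metric.ball_mem_nhds 0 one_pos) heqon
  have hpq : p = q :=
    hf.hasFPowerSeriesAt.eq_formalMultilinearSeries_of_eventually hg.hasFPowerSeriesAt h0
  funext n
  have h2 : p n (fun _ => (1:ℝ)) = q n (fun _ => (1:ℝ)) := by rw [hpq]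
  rw [hp, hq, FormalMultilinearSeries.ofScalars_apply_eq,
    FormalMultilinearSeries.ofScalars_apply_eq] at h2
  simpa using h2

/-- ζ({2}_r) = π^{2r}/(2r+1)!. -/
theorem mzv_two_pow_r (r : ℕ) (hr : 1 ≤ r) :
    (∑' m : {m : Fin r → ℕ // (∀ i, 1 ≤ m i) ∧ StrictAnti m},
      ∏ j, (1 : ℝ) / ((m.1 j : ℝ) ^ 2))
      = Real.pi ^ (2 * r) / (Nat.factorial (2 * r + 1)) := by
  have hterm : ∀ m : MZIdx r, (∏ j, Wgt (m.1 j))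
      = ENNReal.ofReal (∏ j, (1 : ℝ) / ((m.1 j : ℝ) ^ 2)) := by
    intro m
    rw [ENNReal.ofReal_prod_of_nonneg (fun j _ => by positivity)]
    apply Finset.prod_congr rfl
    intro j _
    have hk : (0:ℝ) < ((m.1 j : ℝ) ^ 2) := by
      have := m.2.1 j
      positivity
    rw [one_div, ENNReal.ofReal_inv_of_pos hk]
    unfold Wgt
    congr 1
    rw [ENNReal.ofReal_pow (by positivity)]
    norm_num
  have htermne : ∀ m : MZIdx r, (∏ j, Wgt (m.1 j)) ≠ ⊤ := by
    intro m; rw [hterm m]; exact ENNReal.ofReal_ne_top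
  have hE : ∑' m : MZIdx r, ∏ j, Wgt (m.1 j) = Zmz r := tsum_eq_iSup_Esym r
  have h4 := ENNReal.tsum_toReal_eq htermne
  rw [hE] at h4
  have h5 : (Zmz r).toReal = Real.pi ^ (2 * r) / (Nat.factorial (2 * r + 1)) := by
    have := congrFun zmz_eq_cmz r
    unfold zmz cmz at this
    exact this
  rw [← h5, h4]
  apply tsum_congr
  intro m
  rw [hterm m, ENNReal.toReal_ofReal (by positivity)]
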